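/- Triangularity of the closed-loop SLS parameters: Let ι_x, ι_u, ι_y be finite types with gradings b_x : ι_x → Fin (T+1), b_u : ι_u → Fin (T+1), b_y : ι_y → Fin (T+1). Let Ā (square on ι_x) and B̄ (rows ι_x, columns ι_u) be strictly block lower triangular in time (Ā i j = 0 whenever b_x j ≥ b_x i, and B̄ i j = 0 whenever b_u j ≥ b_x i), let C̄ (rows ι_y, columns ι_x) be block diagonal in time (C̄ i j = 0 whenever b_x j ≠ b_y i), and let K (rows ι_u, columns ι_y) be block lower triangular in time (K i j = 0 whenever b_y j > b_u i). Then the matrix 1 − Ā − B̄ * K * C̄ is invertible, and the matrices Φxx := (1 − Ā − B̄ * K * C̄)⁻¹, Φux := K * C̄ * Φxx, and Φuy := K + K * C̄ * Φxx * B̄ * K are block lower triangular in time (entries vanish whenever the column grade strictly exceeds the row grade), while Φxy := Φxx * B̄ * K is strictly block lower triangular in time (entries vanish whenever the column grade is greater than or equal to the row grade). -/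

import Mathlib

open Matrix

section Aux

variable {T : ℕ} {α β γ : Type*} [Fintype β]

private lemma mul_low_low (f : α → Fin (T+1)) (g : β → Fin (T+1)) (h : γ → Fin (T+1))
    (M : Matrix α β ℝ) (N : Matrix β γ ℝ)
    (hM : ∀ i j, f i < g j → M i j = 0) (hN : ∀ i j, g i < h j → N i j = 0) :
    ∀ i j, f i < h j → (M * N) i j = 0 := by
  intro i j hij
  rw [Matrix.mul_apply]
  apply Finset.sum_eq_zero
  intro k _
  by_cases hk : f i < g k
  · rw [hM i k hk, zero_mul]
  · rw [hN k j (lt_of_le_of_lt (not_lt.1 hk) hij), mul_zero]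

private lemma mul_slow_low (f : α → Fin (T+1)) (g : β → Fin (T+1)) (h : γ → Fin (T+1))
    (M : Matrix α β ℝ) (N : Matrix β γ ℝ)
    (hM : ∀ i j, f i ≤ g j → M i j = 0) (hN : ∀ i j, g i < h j → N i j = 0) :
    ∀ i j, f i ≤ h j → (M * N) i j = 0 := by
  intro i j hij
  rw [Matrix.mul_apply]
  apply Finset.sum_eq_zero
  intro k _
  by_cases hk : f i ≤ g k
  · rw [hM i k hk, zero_mul]
  · rw [hN k j (lt_of_lt_of_le (not_le.1 hk) hij), mul_zero]

private lemma mul_low_slow (f : α → Fin (T+1)) (g : β → Fin (T+1)) (h : γ → Fin (T+1))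
    (M : Matrix α β ℝ) (N : Matrix β γ ℝ)
    (hM : ∀ i j, f i < g j → M i j = 0) (hN : ∀ i j, g i ≤ h j → N i j = 0) :
    ∀ i j, f i ≤ h j → (M * N) i j = 0 := by
  intro i j hij
  rw [Matrix.mul_apply]
  apply Finset.sum_eq_zero
  intro k _
  by_cases hk : f i < g k
  · rw [hM i k hk, zero_mul]
  · rw [hN k j (le_trans (not_lt.1 hk) hij), mul_zero]

private lemma pow_low [DecidableEq β] (f : β → Fin (T+1)) (M : Matrix β β ℝ)
    (hM : ∀ i j, f i ≤ f j → M i j = 0) (n : ℕ) :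
    ∀ i j, f i < f j → (M ^ n) i j = 0 := by
  induction n with
  | zero =>
    intro i j hij
    rw [pow_zero, Matrix.one_apply_ne (fun h => absurd h (by rintro rfl; exact lt_irrefl _ hij))]
  | succ n ih =>
    rw [pow_succ]
    exact mul_low_low f f f (M ^ n) M ih (fun i j h => hM i j h.le)

private lemma pow_strict_zero [DecidableEq β] (f : β → Fin (T+1)) (M : Matrix β β ℝ)
    (hM : ∀ i j, f i ≤ f j → M i j = 0) :
    ∀ n i j, (f i : ℕ) < (f j : ℕ) + n → (M ^ n) i j = 0 := by
  intro n
  induction n with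
  | zero =>
    intro i j hij
    rw [pow_zero, Matrix.one_apply_ne]
    rintro rfl; omega
  | succ n ih =>
    intro i j hij
    rw [pow_succ']
    rw [Matrix.mul_apply]
    apply Finset.sum_eq_zero
    intro k _
    by_cases hk : f i ≤ f k
    · rw [hM i k hk, zero_mul]
    · rw [ih k j (by push_neg at hk; have := Fin.lt_iff_val_lt_val.mp hk; omega), mul_zero]

end Aux

/-- Triangularity of the closed-loop SLS parameters: with `Ā`, `B̄` strictly block lower
triangular in time, `C̄` block diagonal in time, and `K` block lower triangular in time,
the matrix `1 − Ā − B̄ K C̄` is invertible, `Φxx`, `Φux`, `Φuy` are block lower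
triangular in time, and `Φxy` is strictly block lower triangular in time. -/
theorem sls_closed_loop_triangular
    {T : ℕ} {ιx ιu ιy : Type*} [Fintype ιx] [Fintype ιu] [Fintype ιy] [DecidableEq ιx]
    (bx : ιx → Fin (T + 1)) (bu : ιu → Fin (T + 1)) (bY : ιy → Fin (T + 1))
    (A : Matrix ιx ιx ℝ) (B : Matrix ιx ιu ℝ) (C : Matrix ιy ιx ℝ)
    (K : Matrix ιu ιy ℝ)
    (hA : ∀ i j, bx i ≤ bx j → A i j = 0)
    (hB : ∀ i j, bx i ≤ bu j → B i j = 0)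
    (hC : ∀ i j, bx j ≠ bY i → C i j = 0)
    (hK : ∀ i j, bu i < bY j → K i j = 0)
    (Φxx : Matrix ιx ιx ℝ) (Φxy : Matrix ιx ιy ℝ)
    (Φux : Matrix ιu ιx ℝ) (Φuy : Matrix ιu ιy ℝ)
    (hΦxx : Φxx = (1 - A - B * K * C)⁻¹)
    (hΦxy : Φxy = Φxx * B * K)
    (hΦux : Φux = K * C * Φxx)
    (hΦuy : Φuy = K + K * C * Φxx * B * K) :
    IsUnit (1 - A - B * K * C) ∧
    (∀ i j, bx i < bx j → Φxx i j = 0) ∧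
    (∀ i j, bu i < bx j → Φux i j = 0) ∧
    (∀ i j, bu i < bY j → Φuy i j = 0) ∧
    (∀ i j, bx i ≤ bY j → Φxy i j = 0) := by
  have hClow : ∀ i j, bY i < bx j → C i j = 0 := fun i j h => hC i j (ne_of_gt h)
  have hCup : ∀ i j, bx j < bY i → C i j = 0 := fun i j h => hC i j (ne_of_lt h)
  set M : Matrix ιx ιx ℝ := A + B * K * C with hM
  -- M is strictly lower triangular
  have hMs : ∀ i j, bx i ≤ bx j → M i j = 0 := by
    intro i j hij
    have hBKC : (B * K * C) i j = 0 := by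
      refine mul_slow_low bx bY bx (B * K) C ?_ hClow i j hij
      exact mul_slow_low bx bu bY B K hB hK
    simp [hM, Matrix.add_apply, hA i j hij, hBKC]
  have honeM : (1 : Matrix ιx ιx ℝ) - A - B * K * C = 1 - M := by
    rw [hM, sub_sub]
  -- nilpotency
  have hnil : M ^ (T + 1) = 0 := by
    ext i j
    rw [Matrix.zero_apply]
    exact pow_strict_zero bx M hMs (T + 1) i j (by omega)
  set S : Matrix ιx ιx ℝ := ∑ k ∈ Finset.range (T + 1), M ^ k with hS
  have hright : (1 - M) * S = 1 := by
    have h1 : (M - 1) * S = M ^ (T + 1) - 1 := mul_geom_sum M (T + 1)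
    have h2 : (1 - M) * S = -((M - 1) * S) := by rw [← neg_mul, neg_sub]
    rw [h2, h1, hnil, zero_sub, neg_neg]
  have hleft : S * (1 - M) = 1 := by
    have h1 : S * (M - 1) = M ^ (T + 1) - 1 := geom_sum_mul M (T + 1)
    have h2 : S * (1 - M) = -(S * (M - 1)) := by rw [← mul_neg, neg_sub]
    rw [h2, h1, hnil, zero_sub, neg_neg]
  have hinv : (1 - A - B * K * C)⁻¹ = S := by
    rw [honeM]; exact Matrix.inv_eq_right_inv hright
  have hunit : IsUnit (1 - A - B * K * C) := by
    rw [honeM]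
    exact ⟨⟨1 - M, S, hright, hleft⟩, rfl⟩
  have hΦxxS : Φxx = S := by rw [hΦxx, hinv]
  -- S is lower triangular
  have hSlow : ∀ i j, bx i < bx j → S i j = 0 := by
    intro i j hij
    rw [hS, Matrix.sum_apply]
    exact Finset.sum_eq_zero fun k _ => pow_low bx M hMs k i j hij
  have hΦxxlow : ∀ i j, bx i < bx j → Φxx i j = 0 := by
    rw [hΦxxS]; exact hSlow
  refine ⟨hunit, hΦxxlow, ?_, ?_, ?_⟩
  · -- Φux = K * C * Φxx
    rw [hΦux]
    exact mul_low_low bu bx bx (K * C) Φxx (mul_low_low bu bY bx K C hK hClow) hΦxxlow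
  · -- Φuy
    rw [hΦuy]
    intro i j hij
    have h1 : (K * C * Φxx * B * K) i j = 0 := by
      refine mul_slow_low bu bu bY (K * C * Φxx * B) K ?_ hK i j hij.le
      refine mul_low_slow bu bx bu (K * C * Φxx) B ?_ hB
      exact mul_low_low bu bx bx (K * C) Φxx (mul_low_low bu bY bx K C hK hClow) hΦxxlow
    simp [Matrix.add_apply, hK i j hij, h1]
  · -- Φxy
    rw [hΦxy]
    refine mul_slow_low bx bu bY (Φxx * B) K ?_ hK
    exact mul_low_slow bx bx bu Φxx B hΦxxlow hB
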